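/- Let k be a field of characteristic p > 0 and let 𝔤 be a finite-dimensional nilpotent Lie algebra over k. Let J be the two-sided ideal of the universal enveloping algebra U(𝔤) generated by the elements ι(x)ᵖ for all x ∈ 𝔤, and let K = ker ε be the augmentation ideal. Then K is nilpotent modulo J: there exists a positive integer N such that K^N ⊆ J. -/

import Mathlib

set_option synthInstance.maxHeartbeats 1000000
set_option maxHeartbeats 1000000

namespace AugNil

attribute [local instance 100] LieRing.ofAssociativeRing



variable {α : Type*} [LinearOrder α]

/-- Number of inversions of a list. -/
def inv : List α → ℕ
  | [] => 0
  | a :: t => t.countP (fun b => decide (b < a)) + inv t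

lemma sorted_of_inv_eq_zero : ∀ l : List α, inv l = 0 → l.Pairwise (· ≤ ·) := by
  intro l
  induction l with
  | nil => intro _; exact List.Pairwise.nil
  | cons a t ih =>
    intro h
    rw [inv] at h
    have h1 : t.countP (fun b => decide (b < a)) = 0 := by omega
    have h2 : inv t = 0 := by omega
    refine List.pairwise_cons.2 ⟨fun b hb => ?_, ih h2⟩
    by_contra hab
    have hba : b < a := lt_of_not_ge hab
    exact (List.countP_eq_zero.1 h1 b hb) (by simpa using hba)

lemma inv_swap_lt (l₁ l₂ : List α) (a b : α) (hba : b < a) :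
    inv (l₁ ++ b :: a :: l₂) < inv (l₁ ++ a :: b :: l₂) := by
  induction l₁ with
  | nil =>
    simp only [List.nil_append, inv]
    rw [List.countP_cons, List.countP_cons]
    have h1 : ¬ (a < b) := not_lt_of_gt hba
    simp [hba, h1]
    omega
  | cons x l₁ ih =>
    simp only [List.cons_append, inv, List.append_eq]
    have hperm : (l₁ ++ b :: a :: l₂).Perm (l₁ ++ a :: b :: l₂) :=
      List.Perm.append_left l₁ (List.Perm.swap a b l₂)
    rw [hperm.countP_eq]
    omega

omit [LinearOrder α] in
lemma exists_adjacent_of_not_chain' {r : α → α → Prop} :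
    ∀ l : List α, ¬ l.IsChain r →
      ∃ (l₁ : List α) (a b : α) (l₂ : List α), l = l₁ ++ a :: b :: l₂ ∧ ¬ r a b := by
  intro l
  induction l with
  | nil => intro h; exact absurd List.isChain_nil h
  | cons x t ih =>
    intro h
    match t, ih with
    | [], _ => exact absurd (List.isChain_singleton x) h
    | y :: t', ih =>
      rw [List.isChain_cons_cons] at h
      by_cases hxy : r x y
      · have : ¬ (y :: t').IsChain r := fun hc => h ⟨hxy, hc⟩
        obtain ⟨l₁, a, b, l₂, heq, hab⟩ := ih this
        exact ⟨x :: l₁, a, b, l₂, by rw [heq]; rfl, hab⟩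
      · exact ⟨[], x, y, t', rfl, hxy⟩

lemma sorted_decomp (e : α) :
    ∀ l : List α, l.Pairwise (· ≤ ·) →
      ∃ (n : ℕ) (l₁ l₂ : List α), l = l₁ ++ List.replicate n e ++ l₂ ∧
        (∀ x ∈ l₁, x < e) ∧ (∀ x ∈ l₂, e < x) := by
  intro l
  induction l with
  | nil => exact fun _ => ⟨0, [], [], rfl, by simp, by simp⟩
  | cons a t ih =>
    intro hs
    have hs' : t.Pairwise (· ≤ ·) := hs.of_cons
    obtain ⟨n, l₁, l₂, hdec, hlt, hgt⟩ := ih hs'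
    rcases lt_trichotomy a e with h | h | h
    · refine ⟨n, a :: l₁, l₂, ?_, ?_, hgt⟩
      · simpa using congrArg (List.cons a) hdec
      · intro x hx
        rcases List.mem_cons.1 hx with rfl | hx
        · exact h
        · exact hlt x hx
    · subst h
      have hl₁ : l₁ = [] := by
        cases l₁ with
        | nil => rfl
        | cons x l₁' =>
          exfalso
          have hxt : x ∈ t := by rw [hdec]; simp
          have hax : a ≤ x := (List.pairwise_cons.1 hs).1 x hxt
          exact absurd (hlt x (by simp)) (not_lt_of_ge hax)
      subst hl₁
      refine ⟨n + 1, [], l₂, ?_, by simp, hgt⟩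
      simp only [List.nil_append] at hdec ⊢
      rw [List.replicate_succ, List.cons_append]
      exact congrArg (a :: ·) hdec
    · refine ⟨0, [], a :: t, by simp, by simp, ?_⟩
      intro x hx
      rcases List.mem_cons.1 hx with rfl | hx
      · exact h
      · exact lt_of_lt_of_le h ((List.pairwise_cons.1 hs).1 x hx)

variable (R : Type*) [CommRing R] (L : Type*) [LieRing L] [LieAlgebra R L]

lemma lcs_lie_lcs_mem :
    ∀ (a b : ℕ) (x : L), x ∈ LieModule.lowerCentralSeries R L L a →
      ∀ y : L, y ∈ LieModule.lowerCentralSeries R L L b → ⁅x, y⁆ ∈ LieModule.lowerCentralSeries R L L (a + b + 1) := by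
  intro a
  induction a with
  | zero =>
    intro b x _ y hy
    have : (0 : ℕ) + b + 1 = b + 1 := by omega
    rw [this, LieModule.lowerCentralSeries_succ]
    exact LieSubmodule.lie_mem_lie (LieSubmodule.mem_top x) hy
  | succ a ih =>
    intro b x hx y hy
    have hx' : x ∈ Submodule.span R {m : L | ∃ z ∈ (⊤ : LieIdeal R L),
        ∃ u ∈ LieModule.lowerCentralSeries R L L a, ⁅z, u⁆ = m} := by
      rw [← LieSubmodule.lieIdeal_oper_eq_linear_span', LieSubmodule.mem_toSubmodule,
        ← LieModule.lowerCentralSeries_succ]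
      exact hx
    clear hx
    induction hx' using Submodule.span_induction with
    | mem m hm =>
      obtain ⟨z, -, u, hu, rfl⟩ := hm
      rw [lie_lie]
      apply sub_mem
      · have h1 : ⁅u, y⁆ ∈ LieModule.lowerCentralSeries R L L (a + b + 1) := ih b u hu y hy
        have : a + 1 + b + 1 = (a + b + 1) + 1 := by omega
        rw [this, LieModule.lowerCentralSeries_succ]
        exact LieSubmodule.lie_mem_lie (LieSubmodule.mem_top z) h1
      · have h2 : ⁅z, y⁆ ∈ LieModule.lowerCentralSeries R L L (b + 1) := by
          rw [LieModule.lowerCentralSeries_succ]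
          exact LieSubmodule.lie_mem_lie (LieSubmodule.mem_top z) hy
        have h3 := ih (b + 1) u hu _ h2
        have : a + (b + 1) + 1 = a + 1 + b + 1 := by omega
        rwa [this] at h3
    | zero => simp
    | add m₁ m₂ _ _ h1 h2 => rw [add_lie]; exact add_mem h1 h2
    | smul c m _ h1 => rw [smul_lie]; exact Submodule.smul_mem _ _ h1

section Key

variable (p : ℕ) (k : Type*) [Field k] (L : Type*) [LieRing L] [LieAlgebra k L]

local notation "ι" => UniversalEnvelopingAlgebra.ι k (L := L)

/-- The two-sided ideal generated by `p`-th powers. -/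
noncomputable def Jid : TwoSidedIdeal (UniversalEnvelopingAlgebra k L) :=
  TwoSidedIdeal.span {u : UniversalEnvelopingAlgebra k L | ∃ x : L, u = (ι x) ^ p}

lemma Jid_smul_mem {u : UniversalEnvelopingAlgebra k L} (c : k) (h : u ∈ Jid p k L) :
    c • u ∈ Jid p k L := by
  rw [Algebra.smul_def]
  exact (Jid p k L).mul_mem_left _ _ h

variable {M : ℕ} (g : Fin M → L)

/-- The monomial associated to a list of generator indices. -/
noncomputable def fMon (l : List (Fin M)) : UniversalEnvelopingAlgebra k L :=
  (l.map (fun e => ι (g e))).prod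

lemma fMon_nil : fMon k L g [] = 1 := rfl

lemma fMon_cons (a : Fin M) (l : List (Fin M)) :
    fMon k L g (a :: l) = ι (g a) * fMon k L g l := by
  simp [fMon]

lemma fMon_append (l l' : List (Fin M)) :
    fMon k L g (l ++ l') = fMon k L g l * fMon k L g l' := by
  simp [fMon]

lemma fMon_replicate (n : ℕ) (e : Fin M) :
    fMon k L g (List.replicate n e) = (ι (g e)) ^ n := by
  simp [fMon]

variable (w : Fin M → ℕ)

def wsum (l : List (Fin M)) : ℕ := (l.map w).sum

lemma wsum_eq_sum_count (l : List (Fin M)) :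
    wsum w l = ∑ e : Fin M, l.count e * w e := by
  induction l with
  | nil => simp [wsum]
  | cons a t ih =>
    have hcnt : ∀ e : Fin M, (a :: t).count e = t.count e + (if a = e then 1 else 0) := by
      intro e
      by_cases h : a = e
      · subst h; simp [List.count_cons]
      · simp [List.count_cons, h, Ne.symm h]
    simp only [wsum, List.map_cons, List.sum_cons]
    rw [show ((t.map w).sum = wsum w t) from rfl, ih]
    simp only [hcnt, add_mul, Finset.sum_add_distrib, ite_mul, one_mul, zero_mul,
      Finset.sum_ite_eq, Finset.mem_univ, if_true]
    omega

lemma key_sorted (hp : 0 < p) (l : List (Fin M)) (hs : l.Pairwise (· ≤ ·))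
    (hw : (∑ e : Fin M, (p - 1) * w e) + 1 ≤ wsum w l) :
    fMon k L g l ∈ Jid p k L := by
  -- pigeonhole: some index occurs at least p times
  have hex : ∃ e : Fin M, p ≤ l.count e := by
    by_contra hc
    push_neg at hc
    have : wsum w l ≤ ∑ e : Fin M, (p - 1) * w e := by
      rw [wsum_eq_sum_count]
      apply Finset.sum_le_sum
      intro e _
      exact Nat.mul_le_mul_right _ (by have := hc e; omega)
    omega
  obtain ⟨e, he⟩ := hex
  obtain ⟨n, l₁, l₂, hdec, hlt, hgt⟩ := sorted_decomp e l hs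
  have hn : p ≤ n := by
    have hc : l.count e = l₁.count e + n + l₂.count e := by
      rw [hdec]
      simp [List.count_append, List.count_replicate]
      omega
    have h1 : l₁.count e = 0 := by
      rw [List.count_eq_zero]
      intro hmem
      exact absurd rfl (ne_of_lt (hlt e hmem))
    have h2 : l₂.count e = 0 := by
      rw [List.count_eq_zero]
      intro hmem
      exact absurd rfl (ne_of_gt (hgt e hmem))
    omega
  rw [hdec, fMon_append, fMon_append, fMon_replicate]
  have hpow : (ι (g e)) ^ n = (ι (g e)) ^ p * (ι (g e)) ^ (n - p) := by
    rw [← pow_add]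
    congr 1
    omega
  rw [hpow]
  have h1 : (ι (g e)) ^ p ∈ Jid p k L :=
    TwoSidedIdeal.subset_span ⟨g e, rfl⟩
  exact (Jid p k L).mul_mem_right _ _
    ((Jid p k L).mul_mem_left _ _ ((Jid p k L).mul_mem_right _ _ h1))

lemma wsum_append (l l' : List (Fin M)) : wsum w (l ++ l') = wsum w l + wsum w l' := by
  simp [wsum]

lemma wsum_cons (a : Fin M) (l : List (Fin M)) : wsum w (a :: l) = w a + wsum w l := by
  simp [wsum]

lemma key_main (hp : 0 < p)
    (hb : ∀ a b : Fin M, (⁅g a, g b⁆ : L) ∈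
      Submodule.span k (g '' {e : Fin M | w a + w b ≤ w e})) :
    ∀ (n i : ℕ) (l : List (Fin M)), l.length ≤ n → inv l ≤ i →
      (∑ e : Fin M, (p - 1) * w e) + 1 ≤ wsum w l → fMon k L g l ∈ Jid p k L := by
  intro n
  induction n with
  | zero =>
    intro i l hlen _ hw
    have hnil : l = [] := List.length_eq_zero_iff.1 (Nat.le_zero.1 hlen)
    subst hnil
    simp [wsum] at hw
  | succ n ihn =>
    intro i
    induction i with
    | zero =>
      intro l hlen hinv hw
      exact key_sorted p k L g w hp l (sorted_of_inv_eq_zero l (Nat.le_zero.1 hinv)) hw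
    | succ i ihi =>
      intro l hlen hinv hw
      by_cases hsort : l.Pairwise (· ≤ ·)
      · exact key_sorted p k L g w hp l hsort hw
      · have hchain : ¬ l.IsChain (· ≤ ·) := fun hc => hsort (List.isChain_iff_pairwise.1 hc)
        obtain ⟨l₁, a, b, l₂, rfl, hab⟩ := exists_adjacent_of_not_chain' l hchain
        have hba : b < a := lt_of_not_ge hab
        have hz : ι ⁅g a, g b⁆ = ι (g a) * ι (g b) - ι (g b) * ι (g a) := by
          rw [LieHom.map_lie, Ring.lie_def]
        have hsplit : fMon k L g (l₁ ++ a :: b :: l₂)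
            = fMon k L g (l₁ ++ b :: a :: l₂)
              + fMon k L g l₁ * (ι ⁅g a, g b⁆ * fMon k L g l₂) := by
          rw [hz]
          simp only [fMon_append, fMon_cons]
          noncomm_ring
        rw [hsplit]
        apply (Jid p k L).add_mem
        · apply ihi
          · simpa using hlen
          · have := inv_swap_lt l₁ l₂ a b hba
            omega
          · have heq : wsum w (l₁ ++ b :: a :: l₂) = wsum w (l₁ ++ a :: b :: l₂) := by
              rw [wsum_append, wsum_append, wsum_cons, wsum_cons, wsum_cons, wsum_cons]
              omega
            omega
        · have hx := hb a b
          refine Submodule.span_induction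
            (p := fun x _ => fMon k L g l₁ * (ι x * fMon k L g l₂) ∈ Jid p k L)
            ?_ ?_ ?_ ?_ hx
          · rintro x ⟨e, hee, rfl⟩
            have heq : fMon k L g l₁ * (ι (g e) * fMon k L g l₂)
                = fMon k L g (l₁ ++ e :: l₂) := by
              rw [fMon_append, fMon_cons]
            rw [heq]
            apply ihn (inv (l₁ ++ e :: l₂)) (l₁ ++ e :: l₂) ?_ le_rfl ?_
            · have h2 : (l₁ ++ a :: b :: l₂).length = l₁.length + (l₂.length + 2) := by simp
              have h3 : (l₁ ++ e :: l₂).length = l₁.length + (l₂.length + 1) := by simp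
              omega
            · have hee' : w a + w b ≤ w e := hee
              rw [wsum_append, wsum_cons]
              rw [wsum_append, wsum_cons, wsum_cons] at hw
              omega
          · simp only [map_zero, zero_mul, mul_zero]
            exact (Jid p k L).zero_mem
          · intro x y _ _ hx1 hy1
            rw [map_add, add_mul, mul_add]
            exact (Jid p k L).add_mem hx1 hy1
          · intro c x _ hx1
            rw [map_smul, smul_mul_assoc, mul_smul_comm]
            exact Jid_smul_mem p k L c hx1

end Key




variable (k : Type*) [Field k] (L : Type*) [LieRing L] [LieAlgebra k L] [Module.Finite k L]

lemma exists_generators (c : ℕ) (hc : LieModule.lowerCentralSeries k L L c = ⊥) :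
    ∃ (M : ℕ) (g : Fin M → L) (w : Fin M → ℕ),
      (∀ e, 1 ≤ w e) ∧
      (∀ e, g e ∈ LieModule.lowerCentralSeries k L L (w e - 1)) ∧
      (∀ a : ℕ,
        ((LieModule.lowerCentralSeries k L L a : LieSubmodule k L L) : Submodule k L) ≤
          Submodule.span k (g '' {e | a + 1 ≤ w e})) := by
  have hfg : ∀ i : Fin c, ∃ (n : ℕ) (v : Fin n → L),
      Submodule.span k (Set.range v)
        = ((LieModule.lowerCentralSeries k L L i : LieSubmodule k L L) : Submodule k L) := by
    intro i
    exact Submodule.fg_iff_exists_fin_generating_family.1 (IsNoetherian.noetherian _)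
  choose n v hv using hfg
  let E := (i : Fin c) × Fin (n i)
  let eqv : E ≃ Fin (Fintype.card E) := Fintype.equivFin E
  refine ⟨Fintype.card E, fun j => v (eqv.symm j).1 (eqv.symm j).2,
    fun j => (eqv.symm j).1.1 + 1, fun e => le_add_self, ?_, ?_⟩
  · intro e
    have : v (eqv.symm e).1 (eqv.symm e).2 ∈ Submodule.span k (Set.range (v (eqv.symm e).1)) :=
      Submodule.subset_span (Set.mem_range_self _)
    rw [hv] at this
    simpa using this
  · intro a
    by_cases ha : a < c
    · rw [← hv ⟨a, ha⟩]
      apply Submodule.span_le.2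
      rintro x ⟨j, rfl⟩
      apply Submodule.subset_span
      refine ⟨eqv ⟨⟨a, ha⟩, j⟩, ?_, ?_⟩
      · show a + 1 ≤ (eqv.symm (eqv ⟨⟨a, ha⟩, j⟩)).1.1 + 1
        rw [Equiv.symm_apply_apply]
      · show v (eqv.symm (eqv ⟨⟨a, ha⟩, j⟩)).1 (eqv.symm (eqv ⟨⟨a, ha⟩, j⟩)).2 = v ⟨a, ha⟩ j
        rw [Equiv.symm_apply_apply]
    · have : LieModule.lowerCentralSeries k L L a ≤ LieModule.lowerCentralSeries k L L c :=
        LieModule.antitone_lowerCentralSeries k L L (by omega)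
      rw [hc] at this
      intro x hx
      have hx0 : x ∈ (⊥ : LieSubmodule k L L) := this hx
      rw [LieSubmodule.mem_bot] at hx0
      subst hx0
      exact Submodule.zero_mem _




variable (k : Type*) [Field k] (L : Type*) [LieRing L] [LieAlgebra k L]

local notation "ι" => UniversalEnvelopingAlgebra.ι k (L := L)

lemma adjoin_iota_top :
    Algebra.adjoin k (Set.range (UniversalEnvelopingAlgebra.ι k (L := L))) = ⊤ := by
  set S := Algebra.adjoin k (Set.range (UniversalEnvelopingAlgebra.ι k (L := L))) with hS
  have hmem : ∀ x : L, (ι x) ∈ S := fun x => Algebra.subset_adjoin (Set.mem_range_self x)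
  let f : L →ₗ⁅k⁆ S :=
    { toFun := fun x => ⟨ι x, hmem x⟩
      map_add' := fun x y => Subtype.ext (by simp)
      map_smul' := fun c x => Subtype.ext (by simp)
      map_lie' := fun {x y} => Subtype.ext (by
        show (ι ⁅x, y⁆ : UniversalEnvelopingAlgebra k L) = (↑(⁅(⟨ι x, hmem x⟩ : S), (⟨ι y, hmem y⟩ : S)⁆) : UniversalEnvelopingAlgebra k L)
        rw [LieHom.map_lie, Ring.lie_def, Ring.lie_def]
        push_cast
        rfl) }
  let F := UniversalEnvelopingAlgebra.lift k f
  have hcomp : S.val.comp F = AlgHom.id k (UniversalEnvelopingAlgebra k L) := by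
    apply UniversalEnvelopingAlgebra.hom_ext
    ext x
    show S.val (F (ι x)) = ι x
    have : F (ι x) = f x := UniversalEnvelopingAlgebra.lift_ι_apply k f x
    rw [this]
    rfl
  rw [eq_top_iff]
  intro u _
  have : S.val (F u) = u := by
    have := congrArg (fun G => G u) hcomp
    simpa using this
  rw [← this]
  exact (F u).2


section PS

variable (p : ℕ) (k : Type*) [Field k] (L : Type*) [LieRing L] [LieAlgebra k L]

local notation "ι" => UniversalEnvelopingAlgebra.ι k (L := L)

variable {M : ℕ} (g : Fin M → L) (w : Fin M → ℕ)

/-- span of monomials of weight at least `m`. -/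
noncomputable def Pmod (m : ℕ) : Submodule k (UniversalEnvelopingAlgebra k L) :=
  Submodule.span k {u | ∃ l : List (Fin M), m ≤ wsum w l ∧ u = fMon k L g l}

lemma Pmod_anti {a b : ℕ} (h : a ≤ b) : Pmod k L g w b ≤ Pmod k L g w a :=
  Submodule.span_mono (fun _ ⟨l, hl, hu⟩ => ⟨l, le_trans h hl, hu⟩)

lemma Pmod_mul (a b : ℕ) : Pmod k L g w a * Pmod k L g w b ≤ Pmod k L g w (a + b) := by
  rw [Pmod, Pmod, Submodule.span_mul_span]
  apply Submodule.span_le.2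
  rintro u ⟨u₁, ⟨l₁, hl₁, rfl⟩, u₂, ⟨l₂, hl₂, rfl⟩, rfl⟩
  apply Submodule.subset_span
  refine ⟨l₁ ++ l₂, ?_, (fMon_append k L g l₁ l₂).symm⟩
  have : wsum w (l₁ ++ l₂) = wsum w l₁ + wsum w l₂ := by simp [wsum]
  omega

lemma iota_mem_P1
    (hspan0 : ∀ x : L, x ∈ Submodule.span k (g '' {e | 1 ≤ w e})) (x : L) :
    (ι x) ∈ Pmod k L g w 1 := by
  have hx := hspan0 x
  have hmap := Submodule.mem_map_of_mem
    (f := (UniversalEnvelopingAlgebra.ι k (L := L) : L →ₗ⁅k⁆ _).toLinearMap) hx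
  rw [Submodule.map_span] at hmap
  refine Submodule.span_le.2 ?_ hmap
  rintro u ⟨y, ⟨e, he, rfl⟩, rfl⟩
  apply Submodule.subset_span
  refine ⟨[e], ?_, ?_⟩
  · simpa [wsum] using he
  · simp [fMon]

lemma ker_le_P1
    (hspan0 : ∀ x : L, x ∈ Submodule.span k (g '' {e | 1 ≤ w e}))
    (ε : UniversalEnvelopingAlgebra k L →ₐ[k] k)
    (hε : ∀ x : L, ε (UniversalEnvelopingAlgebra.ι k x) = 0) :
    (LinearMap.ker ε.toLinearMap : Submodule k (UniversalEnvelopingAlgebra k L))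
      ≤ Pmod k L g w 1 := by
  set A := algebraMap k (UniversalEnvelopingAlgebra k L)
  have key : ∀ u : UniversalEnvelopingAlgebra k L, u - A (ε u) ∈ Pmod k L g w 1 := by
    intro u
    have hu : u ∈ Submodule.span k
        ((Submonoid.closure (Set.range (UniversalEnvelopingAlgebra.ι k (L := L))) :
          Submonoid (UniversalEnvelopingAlgebra k L)) : Set (UniversalEnvelopingAlgebra k L)) := by
      have h1 : u ∈ Subalgebra.toSubmodule
          (Algebra.adjoin k (Set.range (UniversalEnvelopingAlgebra.ι k (L := L)))) := by
        rw [adjoin_iota_top]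
        exact Submodule.mem_top
      rwa [Algebra.adjoin_eq_span] at h1
    induction hu using Submodule.span_induction with
    | mem m hm =>
      induction hm using Submonoid.closure_induction with
      | mem y hy =>
        obtain ⟨x, rfl⟩ := hy
        rw [hε x, map_zero, sub_zero]
        exact iota_mem_P1 k L g w hspan0 x
      | one =>
        rw [map_one, map_one, sub_self]
        exact Submodule.zero_mem _
      | mul x y hx hy hx1 hy1 =>
        have hid : x * y - A (ε (x * y))
            = (x - A (ε x)) * (y - A (ε y)) + (ε x) • (y - A (ε y))
              + (ε y) • (x - A (ε x)) := by
          rw [map_mul, map_mul, Algebra.smul_def, Algebra.smul_def]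
          have h1 : A (ε y) * x = x * A (ε y) := Algebra.commutes _ _
          have h2 : A (ε y) * A (ε x) = A (ε x) * A (ε y) := Algebra.commutes _ _
          rw [mul_sub, sub_mul, sub_mul, mul_sub, mul_sub, h1, h2]
          abel
        rw [hid]
        refine Submodule.add_mem _ (Submodule.add_mem _ ?_ ?_) ?_
        · exact Pmod_anti k L g w (by omega)
            (Pmod_mul k L g w 1 1 (Submodule.mul_mem_mul hx1 hy1))
        · exact Submodule.smul_mem _ _ hy1
        · exact Submodule.smul_mem _ _ hx1
    | zero =>
      rw [map_zero, map_zero, sub_zero]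
      exact Submodule.zero_mem _
    | add x y _ _ hx1 hy1 =>
      have : x + y - A (ε (x + y)) = (x - A (ε x)) + (y - A (ε y)) := by
        rw [map_add, map_add]
        abel
      rw [this]
      exact Submodule.add_mem _ hx1 hy1
    | smul c x _ hx1 =>
      have : c • x - A (ε (c • x)) = c • (x - A (ε x)) := by
        rw [map_smul, smul_sub]
        congr 1
        simp [A, map_mul, Algebra.smul_def]
      rw [this]
      exact Submodule.smul_mem _ _ hx1
  intro u hu
  have h0 : ε u = 0 := hu
  have := key u
  rwa [h0, map_zero, sub_zero] at this

lemma pow_ker_le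
    (hspan0 : ∀ x : L, x ∈ Submodule.span k (g '' {e | 1 ≤ w e}))
    (ε : UniversalEnvelopingAlgebra k L →ₐ[k] k)
    (hε : ∀ x : L, ε (UniversalEnvelopingAlgebra.ι k x) = 0) :
    ∀ m : ℕ,
      (LinearMap.ker ε.toLinearMap : Submodule k (UniversalEnvelopingAlgebra k L)) ^ (m + 1)
        ≤ Pmod k L g w (m + 1) := by
  intro m
  induction m with
  | zero =>
    rw [pow_one]
    exact ker_le_P1 k L g w hspan0 ε hε
  | succ m ih =>
    rw [pow_succ]
    calc (LinearMap.ker ε.toLinearMap) ^ (m + 1) * LinearMap.ker ε.toLinearMap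
        ≤ Pmod k L g w (m + 1) * Pmod k L g w 1 :=
          mul_le_mul' ih (ker_le_P1 k L g w hspan0 ε hε)
      _ ≤ Pmod k L g w (m + 2) := Pmod_mul k L g w (m + 1) 1

end PS


end AugNil

open AugNil in
/-- For a finite-dimensional nilpotent Lie algebra `𝔤` over a field of
characteristic `p > 0`, the augmentation ideal `K = ker ε` of `U(𝔤)` is nilpotent
modulo the two-sided ideal `J` generated by the elements `ι(x)ᵖ`, `x ∈ 𝔤`:
there is `N > 0` with `K^N ⊆ J`. -/
theorem augmentation_ideal_nilpotent_mod_pth_powers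
    (p : ℕ) (hp : p.Prime) (k : Type*) [Field k] [CharP k p]
    (L : Type*) [LieRing L] [LieAlgebra k L] [Module.Finite k L]
    [LieRing.IsNilpotent L]
    (ε : UniversalEnvelopingAlgebra k L →ₐ[k] k)
    (hε : ∀ x : L, ε (UniversalEnvelopingAlgebra.ι k x) = 0) :
    ∃ N : ℕ, 0 < N ∧
      ∀ u ∈ (LinearMap.ker ε.toLinearMap : Submodule k (UniversalEnvelopingAlgebra k L)) ^ N,
        u ∈ TwoSidedIdeal.span {u : UniversalEnvelopingAlgebra k L |
          ∃ x : L, u = (UniversalEnvelopingAlgebra.ι k x) ^ p} := by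
  obtain ⟨c, hc⟩ :=
    LieModule.IsNilpotent.nilpotent (R := k) (L := L) (M := L)
  obtain ⟨M, g, w, hw1, hmem, hspan⟩ := AugNil.exists_generators k L c hc
  have hp0 : 0 < p := hp.pos
  have hb : ∀ a b : Fin M, (⁅g a, g b⁆ : L) ∈
      Submodule.span k (g '' {e | w a + w b ≤ w e}) := by
    intro a b
    have h1 : ⁅g a, g b⁆ ∈ LieModule.lowerCentralSeries k L L ((w a - 1) + (w b - 1) + 1) :=
      AugNil.lcs_lie_lcs_mem k L (w a - 1) (w b - 1) (g a) (hmem a) (g b) (hmem b)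
    have h2 : (w a - 1) + (w b - 1) + 1 = w a + w b - 1 := by
      have := hw1 a; have := hw1 b; omega
    rw [h2] at h1
    have h3 := hspan (w a + w b - 1)
    have h4 : w a + w b - 1 + 1 = w a + w b := by
      have := hw1 a; have := hw1 b; omega
    rw [h4] at h3
    exact h3 h1
  have hspan0 : ∀ x : L, x ∈ Submodule.span k (g '' {e | 1 ≤ w e}) := by
    intro x
    have hx : x ∈ LieModule.lowerCentralSeries k L L 0 := by
      rw [LieModule.lowerCentralSeries_zero]
      exact LieSubmodule.mem_top x
    have := hspan 0 hx
    simpa using this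
  refine ⟨(∑ e : Fin M, (p - 1) * w e) + 1, Nat.succ_pos _, ?_⟩
  intro u hu
  have h5 : u ∈ AugNil.Pmod k L g w ((∑ e : Fin M, (p - 1) * w e) + 1) :=
    AugNil.pow_ker_le k L g w hspan0 ε hε (∑ e : Fin M, (p - 1) * w e) hu
  clear hu
  have h6 : u ∈ AugNil.Jid p k L := by
    induction h5 using Submodule.span_induction with
    | mem m hm =>
      obtain ⟨l, hl, rfl⟩ := hm
      exact AugNil.key_main p k L g w hp0 hb l.length (inv l) l le_rfl le_rfl hl
    | zero => exact (AugNil.Jid p k L).zero_mem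
    | add x y _ _ hx hy => exact (AugNil.Jid p k L).add_mem hx hy
    | smul c x _ hx => exact AugNil.Jid_smul_mem p k L c hx
  exact h6
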